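/- Let P be a rooted finite poset and Q a finite poset. Let φ : P → Q be an isotone map and let ψ : P → Q be a map for which there exists p ∈ P satisfying: (i) ψ(p₁) ≥ ψ(p₂) for all p₁ ≥ p₂ ≥ p; (ii) ψ(q) = φ(q) for all q ∈ P with q ≱ p; (iii) if p has a lower neighbor q then ψ(p) ≥ ψ(q). Then ψ is isotone. -/

import Mathlib

/-- Lemma 1 (map modification lemma): if `P` is rooted (least element, and any two
elements with a common upper bound are comparable), `φ : P →o Q` is isotone and
`ψ : P → Q` agrees with `φ` outside the filter `{q : p ≤ q}`, is order preserving
above `p`, and respects the lower neighbor of `p` (if any), then `ψ` is isotone. -/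
theorem statement0 {P Q : Type} [PartialOrder P] [Fintype P] [PartialOrder Q] [Fintype Q]
    (hmin : ∃ p₀ : P, ∀ x : P, p₀ ≤ x)
    (hroot : ∀ a b c : P, a ≤ c → b ≤ c → a ≤ b ∨ b ≤ a)
    (φ : P →o Q) (ψ : P → Q) (p : P)
    (h1 : ∀ p₁ p₂ : P, p ≤ p₂ → p₂ ≤ p₁ → ψ p₂ ≤ ψ p₁)
    (h2 : ∀ q : P, ¬ p ≤ q → ψ q = φ q)
    (h3 : ∀ q : P, q ⋖ p → ψ q ≤ ψ p) :
    Monotone ψ := by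
  intro x y hxy
  by_cases hpx : p ≤ x
  · exact h1 y x hpx hxy
  classical
  by_cases hpy : p ≤ y
  · -- x < p
    have hxp : x < p := by
      rcases hroot x p y hxy hpy with h | h
      · exact lt_of_le_of_ne h (by rintro rfl; exact hpx le_rfl)
      · exact absurd h hpx
    -- maximal q with x ≤ q < p
    have hne : (Finset.univ.filter (fun z => x ≤ z ∧ z < p)).Nonempty :=
      ⟨x, by simp [hxp]⟩
    obtain ⟨q, hq, hqmax⟩ : ∃ q ∈ Finset.univ.filter (fun z => x ≤ z ∧ z < p),
        ∀ z ∈ Finset.univ.filter (fun z => x ≤ z ∧ z < p), ¬ q < z := by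
      obtain ⟨q, hq, hm⟩ := Finset.exists_maximal hne
      exact ⟨q, hq, fun z hz hlt => lt_irrefl q (lt_of_lt_of_le hlt (hm hz hlt.le))⟩
    simp only [Finset.mem_filter, Finset.mem_univ, true_and] at hq
    have hcov : q ⋖ p := by
      refine ⟨hq.2, fun z hqz hzp => ?_⟩
      exact hqmax z (by simp [le_of_lt (lt_of_le_of_lt hq.1 hqz), hzp]) hqz
    have hnq : ¬ p ≤ q := fun h => absurd (h.antisymm hq.2.le) hq.2.ne'
    calc ψ x = φ x := h2 x hpx
      _ ≤ φ q := φ.monotone hq.1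
      _ = ψ q := (h2 q hnq).symm
      _ ≤ ψ p := h3 q hcov
      _ ≤ ψ y := h1 y p le_rfl hpy
  · rw [h2 x hpx, h2 y hpy]
    exact φ.monotone hxy
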